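/- Let X be a real vector space, Q ⊆ X a convex set, and F a proper face of Q. Then the affine span aff F of F satisfies aff F ∩ (Q \ F) = ∅, and hence aff F ∩ Q = F. -/

import Mathlib

/-- `F` is a face of the convex set `Q`: a nonempty convex subset of `Q` such that whenever
a point `α • u + (1 - α) • v` with `u, v ∈ Q`, `0 < α < 1` lies in `F`, both `u, v ∈ F`. -/
def IsFace {X : Type*} [AddCommGroup X] [Module ℝ X] (Q F : Set X) : Prop :=
  F.Nonempty ∧ Convex ℝ F ∧ F ⊆ Q ∧
    ∀ u v : X, u ∈ Q → v ∈ Q → ∀ α : ℝ, 0 < α → α < 1 →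
      α • u + (1 - α) • v ∈ F → u ∈ F ∧ v ∈ F

theorem key {X : Type*} [AddCommGroup X] [Module ℝ X]
    (Q F : Set X) (hF : IsFace Q F) {q : X}
    (hqs : q ∈ (affineSpan ℝ F : Set X)) (hqQ : q ∈ Q) : q ∈ F := by
  classical
  obtain ⟨hne, hconv, hsub, hface⟩ := hF
  have hrange : Set.range (Subtype.val : F → X) = F := Subtype.range_val
  rw [← hrange] at hqs
  obtain ⟨t, w, hw1, hq⟩ := eq_affineCombination_of_mem_affineSpan hqs
  have hq' : q = t.centerMass w Subtype.val := by
    rw [hq, affineCombination_eq_centerMass hw1]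
  set s₁ := t.filter (fun x => 0 ≤ w x) with hs₁
  set s₂ := t.filter (fun x => ¬ 0 ≤ w x) with hs₂
  set b : ℝ := ∑ x ∈ s₂, (-w x) with hb
  have hsum_split : ∑ x ∈ s₁, w x + ∑ x ∈ s₂, w x = 1 := by
    rw [Finset.sum_filter_add_sum_filter_not]; exact hw1
  have hs2neg : ∑ x ∈ s₂, w x = -b := by simp [hb]
  have ha : ∑ x ∈ s₁, w x = 1 + b := by linarith
  have hqsum : q = (∑ x ∈ s₁, w x • (x : X)) + ∑ x ∈ s₂, w x • (x : X) := by
    rw [hq', Finset.centerMass, hw1, inv_one, one_smul,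
      Finset.sum_filter_add_sum_filter_not]
  rcases s₂.eq_empty_or_nonempty with h2 | h2
  · have hw0 : ∀ x ∈ t, 0 ≤ w x := by
      intro x hx
      by_contra hneg
      have : x ∈ s₂ := Finset.mem_filter.2 ⟨hx, hneg⟩
      simp [h2] at this
    have : q ∈ convexHull ℝ F := by
      rw [hq']
      exact Finset.centerMass_mem_convexHull t hw0 (by rw [hw1]; norm_num)
        (fun i _ => i.2)
    rwa [hconv.convexHull_eq] at this
  · have hbpos : 0 < b := by
      apply Finset.sum_pos (fun x hx => ?_) h2
      have := (Finset.mem_filter.1 hx).2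
      linarith [lt_of_not_ge this]
    set p : X := s₁.centerMass w Subtype.val with hp
    set n : X := s₂.centerMass (fun x => -w x) Subtype.val with hn
    have hpF : p ∈ F := by
      have : p ∈ convexHull ℝ F :=
        Finset.centerMass_mem_convexHull s₁
          (fun x hx => (Finset.mem_filter.1 hx).2) (by rw [ha]; linarith)
          (fun i _ => i.2)
      rwa [hconv.convexHull_eq] at this
    have hnF : n ∈ F := by
      have : n ∈ convexHull ℝ F :=
        Finset.centerMass_mem_convexHull s₂
          (fun x hx => by have := (Finset.mem_filter.1 hx).2; linarith [lt_of_not_ge this])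
          (by rw [← hb]; exact hbpos) (fun i _ => i.2)
      rwa [hconv.convexHull_eq] at this
    set α : ℝ := 1 / (1 + b) with hα
    have h1b : (0:ℝ) < 1 + b := by linarith
    have hαpos : 0 < α := by positivity
    have hαlt : α < 1 := by
      rw [hα, div_lt_one h1b]; linarith
    have hkey : α • q + (1 - α) • n = p := by
      have hpe : p = (1 + b)⁻¹ • ∑ x ∈ s₁, w x • (x : X) := by
        rw [hp, Finset.centerMass, ha]
      have hne2 : n = b⁻¹ • (-(∑ x ∈ s₂, w x • (x : X))) := by
        rw [hn, Finset.centerMass, ← hb]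
        congr 1
        simp [neg_smul]
      rw [hpe, hne2, hqsum, hα]
      match_scalars <;> field_simp <;> ring
    have := hface q n hqQ (hsub hnF) α hαpos hαlt (hkey ▸ hpF)
    exact this.1

theorem face_affineSpan_inter {X : Type*} [AddCommGroup X] [Module ℝ X]
    (Q F : Set X) (hQ : Convex ℝ Q) (hF : IsFace Q F) (hFQ : F ≠ Q) :
    (affineSpan ℝ F : Set X) ∩ (Q \ F) = ∅ ∧ (affineSpan ℝ F : Set X) ∩ Q = F := by
  constructor
  · ext q
    simp only [Set.mem_inter_iff, Set.mem_diff, Set.mem_empty_iff_false, iff_false]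
    rintro ⟨hqs, hqQ, hqF⟩
    exact hqF (key Q F hF hqs hqQ)
  · apply Set.Subset.antisymm
    · rintro q ⟨hqs, hqQ⟩
      exact key Q F hF hqs hqQ
    · intro q hq
      exact ⟨subset_affineSpan ℝ F hq, hF.2.2.1 hq⟩
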